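/- Let A be a commutative ring, f ∈ A, and for each n let K_n be the cokernel of the map A → A·f^{-n} (inside A_f), i.e. K_n = (f^{-n}A)/A ⊆ A_f/A. Then multiplication by f^n induces an isomorphism K_n ≅ A/(f^n), and the natural map K_n → Â ⊗_A K_n is an isomorphism, where Â = lim_n A/(f^n). Consequently the natural map A_f/A → Â ⊗_A (A_f/A) is an isomorphism. -/

import Mathlib

open TensorProduct

variable {A : Type} [CommRing A] (f : A)

/-- The quotient `A_f / A` of the localization by the image of `A`. -/
def LocModA (f : A) : Type :=
  Localization (Submonoid.powers f) ⧸
    LinearMap.range (Algebra.linearMap A (Localization (Submonoid.powers f)))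

noncomputable instance : AddCommGroup (LocModA f) := by
  unfold LocModA; infer_instance

noncomputable instance : Module A (LocModA f) := by
  unfold LocModA; infer_instance

/-- The map `A → A_f/A`, `a ↦ [a · f⁻ⁿ]`, whose image is `K_n = (f⁻ⁿA)/A` and whose
kernel is `(fⁿ)`. -/
noncomputable def phiN (f : A) (n : ℕ) : A →ₗ[A] LocModA f :=
  (Submodule.mkQ _).comp
    (LinearMap.toSpanSingleton A (Localization (Submonoid.powers f))
      (Localization.mk 1 ⟨f ^ n, ⟨n, rfl⟩⟩))

/-! ### Auxiliary lemmas -/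

section Aux

variable {A : Type} [CommRing A] {f : A}

lemma spanPow (f : A) (n : ℕ) :
    ((Ideal.span {f}) ^ n • ⊤ : Submodule A A) = Ideal.span {f ^ n} := by
  rw [smul_eq_mul, Ideal.mul_top, Ideal.span_singleton_pow]

/-- Division lemma: an element of the `f`-adic completion that vanishes in the `n`-th
quotient is divisible by `f ^ n`. -/
lemma divLemma (hf : f ∈ nonZeroDivisors A) (n : ℕ)
    (x : AdicCompletion (Ideal.span {f}) A) (hx : x.val n = 0) :
    ∃ y, x = f ^ n • y := by
  obtain ⟨c, rfl⟩ := AdicCompletion.mk_surjective _ _ x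
  have hcv : ∀ k, (AdicCompletion.mk _ _ c).val k
      = Submodule.mkQ _ (c k) := fun k => rfl
  have hmem : ∀ k, c (n + k) ∈ Ideal.span {f ^ n} := by
    intro k
    have h1 : c n - c (n + k) ∈ (Ideal.span {f} ^ n • ⊤ : Submodule A A) :=
      SModEq.sub_mem.mp (c.property (Nat.le_add_right n k))
    rw [spanPow] at h1
    have h2 : c n ∈ Ideal.span {f ^ n} := by
      rw [← spanPow]
      have h2' : Submodule.mkQ ((Ideal.span {f}) ^ n • ⊤ : Submodule A A) (c n) = 0 := hx
      rwa [Submodule.mkQ_apply, Submodule.Quotient.mk_eq_zero] at h2'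
    simpa using sub_mem h2 h1
  choose b hb using fun k => Ideal.mem_span_singleton'.mp (hmem k)
  have hbc : ∀ k, b k ≡ b (k + 1) [SMOD ((Ideal.span {f}) ^ k • ⊤ : Submodule A A)] := by
    intro k
    rw [SModEq.sub_mem, spanPow, Ideal.mem_span_singleton']
    have h1 : c (n + k) - c (n + (k + 1)) ∈ Ideal.span {f ^ (n + k)} := by
      rw [← spanPow]
      exact SModEq.sub_mem.mp (c.property (by omega))
    obtain ⟨d, hd⟩ := Ideal.mem_span_singleton'.mp h1
    refine ⟨d, ?_⟩
    have key : f ^ n * (d * f ^ k) = f ^ n * (b k - b (k + 1)) := by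
      linear_combination hd - hb k + hb (k + 1)
    exact (mul_cancel_left_mem_nonZeroDivisors (pow_mem hf n)).mp key
  refine ⟨AdicCompletion.mk _ _ (AdicCompletion.AdicCauchySequence.mk _ _ b hbc), ?_⟩
  apply AdicCompletion.ext
  intro k
  rw [hcv k, AdicCompletion.val_smul]
  show _ = f ^ n • Submodule.mkQ _ (b k)
  rw [← map_smul, Submodule.mkQ_apply, Submodule.mkQ_apply, Submodule.Quotient.eq, spanPow]
  have h1 : c k - c (n + k) ∈ Ideal.span {f ^ k} := by
    rw [← spanPow]
    exact SModEq.sub_mem.mp (c.property (by omega))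
  have h2 : f ^ n • b k = c (n + k) := by rw [smul_eq_mul, mul_comm]; exact hb k
  rwa [h2]

lemma val_smul_one (n : ℕ) (c : A) :
    ((c • 1 : AdicCompletion (Ideal.span {f}) A)).val n = Submodule.Quotient.mk c := by
  rw [AdicCompletion.val_smul_apply, AdicCompletion.val_one]
  have h1 : (1 : A ⧸ (Ideal.span {f} ^ n • ⊤ : Ideal A)) = Submodule.Quotient.mk 1 := rfl
  rw [h1, ← Submodule.Quotient.mk_smul]
  congr 1
  simp

variable (f) in
/-- Reduction map from the completion to `A ⧸ (f ^ n)`. -/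
noncomputable def qmap (n : ℕ) :
    AdicCompletion (Ideal.span {f}) A →ₗ[A] A ⧸ Ideal.span {f ^ n} :=
  (Submodule.quotEquivOfEq _ _ (spanPow f n)).toLinearMap ∘ₗ
    AdicCompletion.eval (Ideal.span {f}) A n

lemma qmap_smul_one (n : ℕ) (c : A) :
    qmap f n (c • 1) = Ideal.Quotient.mk (Ideal.span {f ^ n}) c := by
  have h2 : AdicCompletion.eval (Ideal.span {f}) A n (c • 1)
      = Submodule.Quotient.mk c := val_smul_one n c
  rw [qmap, LinearMap.comp_apply, h2]
  rfl

lemma qmap_surj (n : ℕ) (x : AdicCompletion (Ideal.span {f}) A) :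
    ∃ c : A, (x - c • 1).val n = 0 := by
  obtain ⟨c, hc⟩ := Submodule.Quotient.mk_surjective _ (x.val n)
  exact ⟨c, by rw [AdicCompletion.val_sub_apply, val_smul_one, hc, sub_self]⟩

/-- A pure tensor with an `f ^ n`-torsion element can be written with `1` on the left. -/
lemma exists_tmul (hf : f ∈ nonZeroDivisors A) (n : ℕ) {M : Type} [AddCommGroup M]
    [Module A M] (x : AdicCompletion (Ideal.span {f}) A) (m : M) (hm : f ^ n • m = 0) :
    ∃ c : A, x ⊗ₜ[A] m = (1 : AdicCompletion (Ideal.span {f}) A) ⊗ₜ[A] (c • m) := by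
  obtain ⟨c, hc⟩ := qmap_surj n x
  obtain ⟨y, hy⟩ := divLemma hf n _ hc
  refine ⟨c, ?_⟩
  have hx : x = c • 1 + f ^ n • y := by rw [← hy]; ring
  rw [hx, add_tmul, smul_tmul, smul_tmul, hm, tmul_zero, add_zero]

/-- The natural map `M → Â ⊗ M` is bijective for `f ^ n`-torsion modules `M`. -/
lemma tensorBij (hf : f ∈ nonZeroDivisors A) (n : ℕ) (M : Type) [AddCommGroup M]
    [Module A M] (hM : ∀ m : M, f ^ n • m = 0) :
    Function.Bijective (TensorProduct.mk A (AdicCompletion (Ideal.span {f}) A) M 1) := by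
  have hT : Module.IsTorsionBySet A M (Ideal.span {f ^ n} : Ideal A) := by
    refine (Module.isTorsionBySet_span_singleton_iff (f ^ n)).mpr ?_
    intro m; exact hM m
  letI : Module (A ⧸ Ideal.span {f ^ n}) M := hT.module
  set ψ₀ : AdicCompletion (Ideal.span {f}) A →ₗ[A] M →ₗ[A] M :=
    LinearMap.mk₂ A (fun x m => qmap f n x • m)
      (fun x y m => by show qmap f n (x + y) • m = _; rw [map_add, add_smul])
      (fun a x m => by
        show qmap f n (a • x) • m = a • (qmap f n x • m)
        rw [map_smul]; exact smul_assoc a (qmap f n x) m)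
      (fun x m m' => smul_add _ m m')
      (fun a x m => by
        show qmap f n x • (a • m) = a • (qmap f n x • m)
        obtain ⟨c, hc⟩ := Ideal.Quotient.mk_surjective (qmap f n x)
        rw [← hc, hT.mk_smul, hT.mk_smul]
        exact smul_comm c a m) with hψ₀
  set ψ := TensorProduct.lift ψ₀ with hψ
  have hleft : ∀ m : M, ψ (1 ⊗ₜ[A] m) = m := by
    intro m
    have h3 : ψ (1 ⊗ₜ[A] m) = qmap f n 1 • m := rfl
    rw [h3, show (1 : AdicCompletion (Ideal.span {f}) A) = (1 : A) • 1 by rw [one_smul],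
      qmap_smul_one, hT.mk_smul, one_smul]
  constructor
  · intro m m' h
    have := congrArg ψ h
    simpa only [TensorProduct.mk_apply, hleft] using this
  · intro z
    induction z with
    | zero => exact ⟨0, map_zero _⟩
    | tmul x m =>
      obtain ⟨c, hc⟩ := exists_tmul hf n x m (hM m)
      exact ⟨c • m, by rw [TensorProduct.mk_apply, ← hc]⟩
    | add z w hz hw =>
      obtain ⟨m1, h1⟩ := hz
      obtain ⟨m2, h2⟩ := hw
      exact ⟨m1 + m2, by rw [map_add, h1, h2]⟩

lemma phiN_apply (n : ℕ) (a : A) :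
    phiN f n a = Submodule.Quotient.mk
      (Localization.mk a (⟨f ^ n, ⟨n, rfl⟩⟩ : Submonoid.powers f)) := by
  show Submodule.Quotient.mk
      (a • Localization.mk 1 (⟨f ^ n, ⟨n, rfl⟩⟩ : Submonoid.powers f)) = _
  rw [Localization.smul_mk, smul_eq_mul, mul_one]

lemma kerPhiN (hf : f ∈ nonZeroDivisors A) (n : ℕ) :
    LinearMap.ker (phiN f n) = Ideal.span {f ^ n} := by
  ext a
  rw [LinearMap.mem_ker, phiN_apply]
  erw [Submodule.Quotient.mk_eq_zero]
  rw [LinearMap.mem_range,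
    Ideal.mem_span_singleton]
  constructor
  · rintro ⟨b, hb⟩
    rw [Algebra.linearMap_apply, ← Localization.mk_one_eq_algebraMap,
      Localization.mk_eq_mk_iff, Localization.r_iff_exists] at hb
    obtain ⟨⟨c, k, rfl⟩, hc⟩ := hb
    simp only [OneMemClass.coe_one, one_mul] at hc
    refine ⟨b, ?_⟩
    exact ((mul_cancel_left_mem_nonZeroDivisors (pow_mem hf k)).mp hc).symm
  · rintro ⟨b, rfl⟩
    refine ⟨b, ?_⟩
    rw [Algebra.linearMap_apply, ← Localization.mk_one_eq_algebraMap,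
      Localization.mk_eq_mk_iff, Localization.r_iff_exists]
    exact ⟨1, by simp [mul_comm]⟩

lemma smul_phiN (n : ℕ) (a : A) : f ^ n • phiN f n a = 0 := by
  rw [← map_smul, smul_eq_mul, phiN_apply]
  erw [Submodule.Quotient.mk_eq_zero]
  refine ⟨a, ?_⟩
  rw [Algebra.linearMap_apply, ← Localization.mk_one_eq_algebraMap,
    Localization.mk_eq_mk_iff, Localization.r_iff_exists]
  exact ⟨1, by simp [mul_comm]⟩

lemma rangeMono {n m : ℕ} (h : n ≤ m) :
    LinearMap.range (phiN f n) ≤ LinearMap.range (phiN f m) := by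
  rintro x ⟨a, rfl⟩
  refine ⟨f ^ (m - n) * a, ?_⟩
  rw [phiN_apply, phiN_apply]
  congr 1
  rw [Localization.mk_eq_mk_iff, Localization.r_iff_exists]
  refine ⟨1, ?_⟩
  simp only [OneMemClass.coe_one, one_mul]
  rw [← mul_assoc, ← pow_add]
  congr 2
  omega

lemma mem_range_phiN (m : LocModA f) : ∃ k, m ∈ LinearMap.range (phiN f k) := by
  obtain ⟨q, rfl⟩ := Submodule.Quotient.mk_surjective _ m
  induction q using Localization.induction_on with
  | H p =>
    obtain ⟨a, s⟩ := p
    obtain ⟨k, hk⟩ := s.2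
    refine ⟨k, a, ?_⟩
    rw [phiN_apply]
    congr 2
    exact Subtype.ext hk

lemma K_torsion (n : ℕ) (w : ↥(LinearMap.range (phiN f n))) : f ^ n • w = 0 := by
  obtain ⟨x, a, rfl⟩ := w
  refine Subtype.ext ?_
  show f ^ n • phiN f n a = 0
  exact smul_phiN n a

variable (f)

/-- Inclusion maps of the directed system `K_n`. -/
noncomputable abbrev Kincl : ∀ i j : ℕ, i ≤ j →
    ↥(LinearMap.range (phiN f i)) →ₗ[A] ↥(LinearMap.range (phiN f j)) :=
  fun _ _ h => Submodule.inclusion (rangeMono h)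

instance : DirectedSystem (fun n => ↥(LinearMap.range (phiN f n)))
    (fun i j h => Kincl f i j h) where
  map_self := fun _ _ => rfl
  map_map := fun _ _ _ _ _ _ => rfl

/-- The canonical map from the direct limit of the `K_n` to `A_f/A`. -/
noncomputable def lam : Module.DirectLimit (fun n => ↥(LinearMap.range (phiN f n)))
    (Kincl f) →ₗ[A] LocModA f :=
  Module.DirectLimit.lift A ℕ _ (Kincl f) (fun n => (LinearMap.range (phiN f n)).subtype)
    (fun _ _ _ _ => rfl)

lemma lam_bij : Function.Bijective (lam f) := by
  constructor
  · exact Module.DirectLimit.lift_injective _ _ (fun i => Subtype.val_injective)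
  · intro m
    obtain ⟨k, hk⟩ := mem_range_phiN m
    exact ⟨Module.DirectLimit.of A ℕ _ (Kincl f) k ⟨m, hk⟩,
      Module.DirectLimit.lift_of _ _ _⟩

instance : DirectedSystem (fun n => AdicCompletion (Ideal.span {f}) A ⊗[A]
      ↥(LinearMap.range (phiN f n)))
    (fun i j h => LinearMap.lTensor (AdicCompletion (Ideal.span {f}) A) (Kincl f i j h)) where
  map_self := fun i x => by
    have h : Kincl f i i le_rfl = LinearMap.id := by ext x; rfl
    rw [h, LinearMap.lTensor_id, LinearMap.id_apply]
  map_map := fun {k j i} h1 h2 x => by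
    have h : Kincl f j k h2 ∘ₗ Kincl f i j h1 = Kincl f i k (h1.trans h2) := by ext x; rfl
    rw [← h, LinearMap.lTensor_comp, LinearMap.comp_apply]

variable {f}

set_option synthInstance.maxHeartbeats 1000000 in
set_option maxHeartbeats 2000000 in
lemma inj3 (hf : f ∈ nonZeroDivisors A) :
    Function.Injective
      (TensorProduct.mk A (AdicCompletion (Ideal.span {f}) A) (LocModA f) 1) := by
  set Q := AdicCompletion (Ideal.span {f}) A
  have h0 : ∀ m : LocModA f, (1 : Q) ⊗ₜ[A] m = 0 → m = 0 := by
    intro m hm0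
    obtain ⟨k, hk⟩ := mem_range_phiN m
    set u := Module.DirectLimit.of A ℕ _ (Kincl f) k ⟨m, hk⟩ with hu
    set E := LinearEquiv.ofBijective (lam f) (lam_bij f) with hE
    have hEu : E u = m := by
      show lam f u = m
      rw [hu, lam]
      exact Module.DirectLimit.lift_of _ _ _
    have h1 : (LinearEquiv.lTensor Q E) ((1 : Q) ⊗ₜ[A] u) = 0 := by
      rw [LinearEquiv.lTensor_tmul, hEu, hm0]
    have h2 : (1 : Q) ⊗ₜ[A] u = 0 := by
      apply (LinearEquiv.lTensor Q E).injective
      rw [h1, map_zero]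
    have h3 := congrArg (TensorProduct.directLimitRight (Kincl f) Q) h2
    rw [hu, TensorProduct.directLimitRight_tmul_of, map_zero] at h3
    obtain ⟨j, hij, hz⟩ := Module.DirectLimit.of.zero_exact h3
    rw [LinearMap.lTensor_tmul] at hz
    have hinj := (tensorBij hf j _ (K_torsion j)).injective
    have h4 : Kincl f k j hij ⟨m, hk⟩ = 0 := by
      apply hinj
      rw [TensorProduct.mk_apply, hz, map_zero]
    exact congrArg Subtype.val h4
  intro m m' h
  have h5 : (1 : Q) ⊗ₜ[A] (m - m') = 0 := by
    rw [tmul_sub]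
    rw [TensorProduct.mk_apply, TensorProduct.mk_apply] at h
    rw [h, sub_self]
  exact sub_eq_zero.mp (h0 _ h5)

end Aux

/-- For a non-zero-divisor `f`, multiplication by `fⁿ` identifies
`K_n = (f⁻ⁿA)/A ⊆ A_f/A` with `A/(fⁿ)` (equivalently, the surjection
`A → K_n`, `a ↦ [a f⁻ⁿ]`, has kernel `(fⁿ)`); the natural map `K_n → Â ⊗ K_n` is an
isomorphism; and consequently the natural map `A_f/A → Â ⊗ (A_f/A)` is an
isomorphism, where `Â = lim A/(fⁿ)`. -/
theorem stmt_13 (hf : f ∈ nonZeroDivisors A) (n : ℕ) :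
    LinearMap.ker (phiN f n) = Ideal.span {f ^ n} ∧
    Function.Bijective
      (TensorProduct.mk A (AdicCompletion (Ideal.span {f}) A)
        (LinearMap.range (phiN f n)) 1) ∧
    Function.Bijective
      (TensorProduct.mk A (AdicCompletion (Ideal.span {f}) A) (LocModA f) 1) := by
  refine ⟨kerPhiN hf n, tensorBij hf n _ (K_torsion n), ⟨inj3 hf, ?_⟩⟩
  intro z
  induction z with
  | zero => exact ⟨0, map_zero _⟩
  | tmul x m =>
    obtain ⟨k, hk⟩ := mem_range_phiN m
    obtain ⟨a, rfl⟩ := hk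
    obtain ⟨c, hc⟩ := exists_tmul hf k x _ (smul_phiN k a)
    exact ⟨c • phiN f k a, by rw [TensorProduct.mk_apply, ← hc]⟩
  | add z w hz hw =>
    obtain ⟨m1, h1⟩ := hz
    obtain ⟨m2, h2⟩ := hw
    exact ⟨m1 + m2, by rw [map_add, h1, h2]⟩
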